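/- arXiv:1911.02857 — 2 statements merged into one kernel-verified Lean document; each statement's English description precedes it below -/
import Mathlib

section
/- Let Δf(t_n) = (2HR/(T_d·D'²))·ln(T_d·D'·ΔP_L/(2HR) + 1) − ΔP_L/D' denote the frequency nadir. In the limit D' → 0⁺ (with H, R, T_d, ΔP_L > 0 fixed), Δf(t_n) → −ΔP_L²·T_d/(4HR). Consequently, in the zero-damping limit the nadir magnitude constraint |Δf(t_n)| ≤ Δf_lim is equivalent to H·R ≥ ΔP_L²·T_d/(4·Δf_lim). -/
open Filter Set
open scoped Topology

/-- the frequency nadir tends to `−ΔP_L²·T_d/(4HR)` as `D' → 0⁺`, and in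
this zero-damping limit the nadir magnitude constraint is equivalent to
`H·R ≥ ΔP_L²·T_d/(4·Δf_lim)`. -/
theorem nadir_zero_damping_limit
    (H R Td ΔPL Δflim : ℝ)
    (hH : 0 < H) (hR : 0 < R) (hTd : 0 < Td) (hP : 0 < ΔPL) (hlim : 0 < Δflim) :
    Filter.Tendsto
      (fun D' : ℝ =>
        (2 * H * R / (Td * D' ^ 2)) *
          Real.log (Td * D' * ΔPL / (2 * H * R) + 1) - ΔPL / D')
      (nhdsWithin 0 (Set.Ioi 0))
      (nhds (-(ΔPL ^ 2 * Td / (4 * H * R)))) ∧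
    (|(-(ΔPL ^ 2 * Td / (4 * H * R)))| ≤ Δflim ↔
      H * R ≥ ΔPL ^ 2 * Td / (4 * Δflim)) := by
  have hHR : (0:ℝ) < 2 * H * R := by positivity
  set k : ℝ := Td * ΔPL / (2 * H * R) with hk
  have hk0 : 0 < k := by positivity
  clear_value k
  constructor
  · set F : ℝ → ℝ := fun x => 2 * H * R * Real.log (k * x + 1) - ΔPL * Td * x with hF
    set G : ℝ → ℝ := fun x => Td * x ^ 2 with hG
    have hden : ∀ x : ℝ, 0 < x → (0:ℝ) < k * x + 1 := fun x hx => by positivity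
    have key : Tendsto (fun x => F x / G x) (𝓝[>] (0:ℝ))
        (𝓝 (-(ΔPL ^ 2 * Td / (4 * H * R)))) := by
      apply HasDerivAt.lhopital_zero_nhdsGT
        (f' := fun x => 2 * H * R * ((k * x + 1)⁻¹ * k) - ΔPL * Td)
        (g' := fun x => 2 * Td * x)
      · filter_upwards [self_mem_nhdsWithin] with x hx
        have hne : k * x + 1 ≠ 0 := ne_of_gt (hden x hx)
        have h1 : HasDerivAt (fun x : ℝ => k * x + 1) k x := by
          simpa using ((hasDerivAt_id x).const_mul k).add_const 1
        have h2 := (Real.hasDerivAt_log hne).comp x h1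
        have h3 := h2.const_mul (2 * H * R)
        have h4 : HasDerivAt (fun x : ℝ => ΔPL * Td * x) (ΔPL * Td) x := by
          simpa using (hasDerivAt_id x).const_mul (ΔPL * Td)
        exact h3.sub h4
      · filter_upwards [self_mem_nhdsWithin] with x hx
        have : HasDerivAt (fun x : ℝ => Td * x ^ 2) (Td * (2 * x)) x := by
          simpa using (hasDerivAt_pow 2 x).const_mul Td
        have heq : Td * (2 * x) = 2 * Td * x := by ring
        rw [← heq]; exact this
      · filter_upwards [self_mem_nhdsWithin] with x hx
        have hx0 : (0:ℝ) < x := hx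
        positivity
      · have h1 : ContinuousAt (fun x : ℝ => k * x + 1) 0 := by fun_prop
        have h0 : ContinuousAt Real.log (k * 0 + 1) := Real.continuousAt_log (by norm_num)
        have hcomp := ContinuousAt.comp (g := Real.log) (f := fun x : ℝ => k * x + 1)
          (x := (0:ℝ)) h0 h1
        have h4 : ContinuousAt (fun x : ℝ => ΔPL * Td * x) 0 := by fun_prop
        have hc : ContinuousAt F 0 := (hcomp.const_mul _).sub h4
        have := hc.tendsto.mono_left (nhdsWithin_le_nhds (s := Set.Ioi (0:ℝ)))
        simpa [hF, Real.log_one] using this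
      · have hc : ContinuousAt G 0 := by fun_prop
        have := hc.tendsto.mono_left (nhdsWithin_le_nhds (s := Set.Ioi (0:ℝ)))
        simpa [hG] using this
      · have hc : ContinuousAt (fun x : ℝ => -(ΔPL * k) / (2 * (k * x + 1))) 0 := by
          apply ContinuousAt.div (by fun_prop) (by fun_prop)
          norm_num
        have hval : -(ΔPL * k) / (2 * (k * 0 + 1)) = -(ΔPL ^ 2 * Td / (4 * H * R)) := by
          rw [hk]; field_simp; ring
        have ht : Tendsto (fun x : ℝ => -(ΔPL * k) / (2 * (k * x + 1))) (𝓝[>] (0:ℝ))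
            (𝓝 (-(ΔPL ^ 2 * Td / (4 * H * R)))) := by
          have h2 := hc.tendsto.mono_left (nhdsWithin_le_nhds (s := Ioi (0:ℝ)))
          beta_reduce at h2
          rwa [hval] at h2
        refine ht.congr' ?_
        filter_upwards [self_mem_nhdsWithin] with x hx
        have hx0 : (0:ℝ) < x := hx
        have hne : k * x + 1 ≠ 0 := ne_of_gt (hden x hx0)
        have h2HRk : 2 * H * R * k = Td * ΔPL := by rw [hk]; field_simp
        have hnum : 2 * H * R * ((k * x + 1)⁻¹ * k) = Td * ΔPL * (k * x + 1)⁻¹ := by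
          rw [← h2HRk]; ring
        rw [hnum]
        rw [div_eq_div_iff (by positivity) (by positivity)]
        field_simp
        ring
    refine key.congr' ?_
    filter_upwards [self_mem_nhdsWithin] with x hx
    have hx0 : (0:ℝ) < x := hx
    have hne : k * x + 1 ≠ 0 := ne_of_gt (hden x hx0)
    have harg : Td * x * ΔPL / (2 * H * R) + 1 = k * x + 1 := by rw [hk]; ring
    rw [harg]
    simp only [hF, hG]
    field_simp
  · have hx : (0:ℝ) < ΔPL ^ 2 * Td / (4 * H * R) := by positivity
    rw [abs_neg, abs_of_pos hx, ge_iff_le, div_le_iff₀ (by positivity),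
      div_le_iff₀ (by positivity)]
    constructor <;> intro h <;> nlinarith
end

section
/- For fixed H, R, T_d, ΔP_L > 0, the function D' ↦ −Δf(t_n) = ΔP_L/D' − (2HR/(T_d·D'²))·ln(T_d·D'·ΔP_L/(2HR) + 1) is strictly decreasing in D' on (0, ∞). -/
/-- Key inequality: `2·ln(1+x) < x + x/(1+x)` for `x > 0`. -/
lemma nadir_key (x : ℝ) (hx : 0 < x) : 2 * Real.log (1 + x) < x + x / (1 + x) := by
  set φ : ℝ → ℝ := fun y => y + y / (1 + y) - 2 * Real.log (1 + y) with hφ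
  have hder : ∀ y : ℝ, 0 < 1 + y →
      HasDerivAt φ (1 + (1 * (1 + y) - y * 1) / (1 + y) ^ 2 - 2 * (1 / (1 + y))) y := by
    intro y hy
    have h1 : HasDerivAt (fun y : ℝ => 1 + y) 1 y := by
      simpa using (hasDerivAt_id y).const_add 1
    have h2 : HasDerivAt (fun y : ℝ => y / (1 + y)) ((1 * (1 + y) - y * 1) / (1 + y) ^ 2) y :=
      (hasDerivAt_id y).div h1 hy.ne'
    have h3 : HasDerivAt (fun y : ℝ => Real.log (1 + y)) (1 / (1 + y)) y := h1.log hy.ne'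
    exact ((hasDerivAt_id y).add h2).sub (h3.const_mul 2)
  have hmono : StrictMonoOn φ (Set.Ici 0) := by
    apply strictMonoOn_of_deriv_pos (convex_Ici 0)
    · intro y hy
      have hy1 : 0 < 1 + y := by simp at hy; linarith
      exact (hder y hy1).continuousAt.continuousWithinAt
    · intro y hy
      rw [interior_Ici] at hy
      have hy0 : 0 < y := hy
      have hy1 : 0 < 1 + y := by linarith
      rw [(hder y hy1).deriv]
      have : 1 + (1 * (1 + y) - y * 1) / (1 + y) ^ 2 - 2 * (1 / (1 + y))
          = y ^ 2 / (1 + y) ^ 2 := by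
        field_simp
        ring
      rw [this]
      positivity
  have h0 : φ 0 < φ x := hmono (by simp) (le_of_lt hx) hx
  have : φ 0 = 0 := by simp [hφ]
  rw [this] at h0
  simp only [hφ] at h0
  linarith

/-- the nadir magnitude
`D' ↦ ΔP_L/D' − (2HR/(T_d·D'²))·ln(T_d·D'·ΔP_L/(2HR) + 1)` is strictly decreasing
on `(0, ∞)`. -/
theorem nadir_magnitude_strictAnti
    (H R Td ΔPL : ℝ)
    (hH : 0 < H) (hR : 0 < R) (hTd : 0 < Td) (hP : 0 < ΔPL) :
    StrictAntiOn
      (fun D' : ℝ =>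
        ΔPL / D' - (2 * H * R / (Td * D' ^ 2)) *
          Real.log (Td * D' * ΔPL / (2 * H * R) + 1))
      (Set.Ioi 0) := by
  have hHR : (0:ℝ) < 2 * H * R := by positivity
  set a : ℝ := Td * ΔPL / (2 * H * R) with ha
  have hapos : 0 < a := by rw [ha]; positivity
  -- derivative of the nadir magnitude at each D > 0
  have hder : ∀ D : ℝ, 0 < D →
      HasDerivAt (fun D' : ℝ =>
        ΔPL / D' - (2 * H * R / (Td * D' ^ 2)) *
          Real.log (Td * D' * ΔPL / (2 * H * R) + 1))
        ((0 * D - ΔPL * 1) / D ^ 2 -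
          ((0 * (Td * D ^ 2) - 2 * H * R * (Td * ((2:ℕ) * D ^ (2 - 1)))) / (Td * D ^ 2) ^ 2 *
              Real.log (Td * D * ΔPL / (2 * H * R) + 1) +
            2 * H * R / (Td * D ^ 2) *
              (Td * 1 * ΔPL / (2 * H * R) / (Td * D * ΔPL / (2 * H * R) + 1)))) D := by
    intro D hD
    have hDne : D ≠ 0 := hD.ne'
    have hargpos : 0 < Td * D * ΔPL / (2 * H * R) + 1 := by positivity
    have h1 : HasDerivAt (fun D' : ℝ => ΔPL / D') ((0 * D - ΔPL * 1) / D ^ 2) D :=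
      (hasDerivAt_const D ΔPL).div (hasDerivAt_id D) hDne
    have h2 : HasDerivAt (fun D' : ℝ => 2 * H * R / (Td * D' ^ 2))
        ((0 * (Td * D ^ 2) - 2 * H * R * (Td * ((2:ℕ) * D ^ (2 - 1)))) / (Td * D ^ 2) ^ 2) D :=
      (hasDerivAt_const D (2 * H * R)).div ((hasDerivAt_pow 2 D).const_mul Td)
        (by positivity)
    have h3 : HasDerivAt (fun D' : ℝ => Td * D' * ΔPL / (2 * H * R) + 1)
        (Td * 1 * ΔPL / (2 * H * R)) D :=
      ((((hasDerivAt_id D).const_mul Td).mul_const ΔPL).div_const (2 * H * R)).add_const 1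
    have h4 : HasDerivAt (fun D' : ℝ => Real.log (Td * D' * ΔPL / (2 * H * R) + 1))
        (Td * 1 * ΔPL / (2 * H * R) / (Td * D * ΔPL / (2 * H * R) + 1)) D :=
      h3.log hargpos.ne'
    exact h1.sub (h2.mul h4)
  apply strictAntiOn_of_deriv_neg (convex_Ioi 0)
  · intro D hD
    exact (hder D hD).continuousAt.continuousWithinAt
  · intro D hD
    rw [interior_Ioi] at hD
    have hD : (0:ℝ) < D := hD
    have hDne : D ≠ 0 := hD.ne'
    rw [(hder D hD).deriv]
    have harg : Td * D * ΔPL / (2 * H * R) = a * D := by rw [ha]; ring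
    rw [harg]
    have haD1 : 0 < a * D + 1 := by positivity
    have hkey : 2 * Real.log (1 + a * D) < a * D + a * D / (1 + a * D) :=
      nadir_key (a * D) (by positivity)
    rw [add_comm (1:ℝ) (a * D)] at hkey
    set L : ℝ := Real.log (a * D + 1) with hL
    have hfac : (0 * D - ΔPL * 1) / D ^ 2 -
          ((0 * (Td * D ^ 2) - 2 * H * R * (Td * ((2:ℕ) * D ^ (2 - 1)))) / (Td * D ^ 2) ^ 2 * L +
            2 * H * R / (Td * D ^ 2) * (Td * 1 * ΔPL / (2 * H * R) / (a * D + 1)))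
        = ΔPL / (a * D ^ 3) * (2 * L - (a * D + a * D / (a * D + 1))) := by
      rw [ha]
      field_simp
      ring
    rw [hfac]
    apply mul_neg_of_pos_of_neg
    · positivity
    · linarith
end
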